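/- arXiv:1305.2610 — 4 statements merged into one kernel-verified Lean document; each statement's English description precedes it below -/
import Mathlib

section
/- For every k ≥ 1 and every p ∈ Δ_k, the sequence of iterates (F^n(p))_{n≥1} converges (to a point of the closed simplex). -/
open Filter Topology

/-- The map F on ℝ^{k+1} (coordinates indexed 0,…,k; the last coordinate is the
"empty" state).  For i < k, F_i(x) = x_i² + 2 x_i x_k; the last coordinate is
F_k(x) = x_k² + 2 Σ_{a<b<k} x_a x_b. -/
noncomputable def Fmap (k : ℕ) (x : Fin (k + 1) → ℝ) : Fin (k + 1) → ℝ :=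
  fun i =>
    if i.val < k then x i ^ 2 + 2 * x i * x (Fin.last k)
    else x (Fin.last k) ^ 2 +
      2 * ∑ a : Fin (k + 1), ∑ b : Fin (k + 1),
        (if a.val < b.val ∧ b.val < k then x a * x b else 0)

/-- The open simplex Δ_k ⊆ ℝ^{k+1}. -/
def simplex (k : ℕ) : Set (Fin (k + 1) → ℝ) :=
  {p | (∑ i, p i) = 1 ∧ ∀ i, 0 < p i}


lemma sum_split (k : ℕ) (g : Fin (k+1) → ℝ) :
    ∑ i, g i = (∑ i, if i.val < k then g i else 0) + g (Fin.last k) := by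
  rw [Fin.sum_univ_castSucc, Fin.sum_univ_castSucc (f := fun i => if i.val < k then g i else 0)]
  simp

lemma pair_sum_eq (k : ℕ) (x : Fin (k+1) → ℝ) :
    2 * (∑ a : Fin (k+1), ∑ b : Fin (k+1),
        (if a.val < b.val ∧ b.val < k then x a * x b else 0))
      = (∑ i : Fin (k+1), if i.val < k then x i else 0)^2
        - ∑ i : Fin (k+1), (if i.val < k then x i ^ 2 else 0) := by
  set P := ∑ a : Fin (k+1), ∑ b : Fin (k+1),
      (if a.val < b.val ∧ b.val < k then x a * x b else 0) with hP
  set Q := ∑ a : Fin (k+1), ∑ b : Fin (k+1),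
      (if b.val < a.val ∧ a.val < k then x a * x b else 0) with hQ
  set Z := ∑ i : Fin (k+1), (if i.val < k then x i ^ 2 else 0) with hZ
  have key : ∀ a b : Fin (k+1),
      (if a.val < k then x a else 0) * (if b.val < k then x b else 0)
        = (if a.val < b.val ∧ b.val < k then x a * x b else 0)
          + (if b.val < a.val ∧ a.val < k then x a * x b else 0)
          + (if a = b then (if a.val < k then x a ^ 2 else 0) else 0) := by
    intro a b
    by_cases hab : a = b
    · subst hab
      simp only [if_pos rfl, lt_irrefl, false_and, if_neg (show ¬(False : Prop) from id)]
      split_ifs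
      all_goals first | ring1 | omega
    · have hv : a.val ≠ b.val := fun h => hab (Fin.ext h)
      simp only [if_neg hab, add_zero]
      split_ifs
      all_goals first | ring1 | (exfalso; omega)
  have h1 : (∑ i : Fin (k+1), if i.val < k then x i else 0)^2
      = ∑ a : Fin (k+1), ∑ b : Fin (k+1),
        (if a.val < k then x a else 0) * (if b.val < k then x b else 0) := by
    rw [sq, Finset.sum_mul_sum]
  have h3 : ∑ a : Fin (k+1), ∑ b : Fin (k+1),
        (if a.val < k then x a else 0) * (if b.val < k then x b else 0)
      = P + Q + Z := by
    have heach : ∀ a : Fin (k+1), ∑ b : Fin (k+1),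
        (if a.val < k then x a else 0) * (if b.val < k then x b else 0)
        = (∑ b : Fin (k+1), (if a.val < b.val ∧ b.val < k then x a * x b else 0))
          + (∑ b : Fin (k+1), (if b.val < a.val ∧ a.val < k then x a * x b else 0))
          + (if a.val < k then x a ^ 2 else 0) := by
      intro a
      rw [Finset.sum_congr rfl fun b _ => key a b, Finset.sum_add_distrib,
        Finset.sum_add_distrib]
      congr 1
      simp
    rw [Finset.sum_congr rfl fun a _ => heach a, Finset.sum_add_distrib,
      Finset.sum_add_distrib]
  have hPQ : Q = P := by
    rw [hQ, Finset.sum_comm]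
    refine Finset.sum_congr rfl fun u _ => Finset.sum_congr rfl fun v _ => ?_
    split_ifs
    all_goals first | ring1 | (exfalso; omega)
  rw [h1, h3, hPQ]; ring

lemma Fmap_sum (k : ℕ) (x : Fin (k+1) → ℝ) :
    ∑ i, Fmap k x i = (∑ i, x i)^2 := by
  have h1 := sum_split k (Fmap k x)
  have h2 := sum_split k x
  have h3 := pair_sum_eq k x
  have h4 : ∀ i : Fin (k+1), (if i.val < k then Fmap k x i else 0)
      = (if i.val < k then x i ^ 2 else 0)
        + 2 * (if i.val < k then x i else 0) * x (Fin.last k) := by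
    intro i
    by_cases h : i.val < k <;> simp [Fmap, h] <;> ring
  have h5 : Fmap k x (Fin.last k) = x (Fin.last k) ^ 2
      + 2 * ∑ a : Fin (k+1), ∑ b : Fin (k+1),
          (if a.val < b.val ∧ b.val < k then x a * x b else 0) := by
    simp [Fmap]
  have h6 : (∑ i : Fin (k+1), if i.val < k then Fmap k x i else 0)
      = (∑ i : Fin (k+1), (if i.val < k then x i ^ 2 else 0))
        + 2 * (∑ i : Fin (k+1), if i.val < k then x i else 0) * x (Fin.last k) := by
    rw [Finset.sum_congr rfl fun i _ => h4 i, Finset.sum_add_distrib]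
    congr 1
    rw [← Finset.sum_mul, ← Finset.mul_sum]
  rw [h1, h2, h6, h5]
  nlinarith [h3]

lemma Fmap_pos (k : ℕ) {x : Fin (k+1) → ℝ} (hx : ∀ i, 0 < x i) (i : Fin (k+1)) :
    0 < Fmap k x i := by
  have hP : 0 ≤ ∑ a : Fin (k+1), ∑ b : Fin (k+1),
      (if a.val < b.val ∧ b.val < k then x a * x b else 0) :=
    Finset.sum_nonneg fun a _ => Finset.sum_nonneg fun b _ => by
      split_ifs
      · exact (mul_pos (hx a) (hx b)).le
      · exact le_refl 0
  unfold Fmap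
  split_ifs with h
  · nlinarith [hx i, hx (Fin.last k)]
  · nlinarith [hx (Fin.last k)]

lemma aux_decay {a e : ℕ → ℝ} {lam : ℝ} (hlam0 : 0 ≤ lam) (hlam1 : lam < 1)
    (ha : ∀ n, 0 ≤ a n) (hrec : ∀ n, a (n + 1) ≤ lam * a n + e n)
    (he : Tendsto e atTop (𝓝 0)) :
    Tendsto a atTop (𝓝 0) := by
  rw [Metric.tendsto_atTop]
  intro eta heta
  have h1lam : 0 < 1 - lam := by linarith
  have hc : 0 < eta * (1 - lam) / 4 := by positivity
  obtain ⟨N1, hN1⟩ := (Metric.tendsto_atTop.mp he) _ hc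
  have hN1' : ∀ n, N1 ≤ n → e n ≤ eta * (1 - lam) / 4 := by
    intro n hn
    have h := hN1 n hn
    rw [Real.dist_eq, sub_zero] at h
    exact (le_abs_self _).trans h.le
  have hkey : ∀ i, a (N1 + i) ≤ lam ^ i * a N1 + eta / 2 := by
    intro i
    induction i with
    | zero => simp; linarith [ha N1]
    | succ i ih =>
      have h1 := hrec (N1 + i)
      have h2 := hN1' (N1 + i) (Nat.le_add_right _ _)
      have h10 : lam * (lam ^ i * a N1 + eta / 2)
          = lam ^ (i+1) * a N1 + lam * (eta/2) := by rw [pow_succ]; ring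
      have h11 : lam * (eta/2) ≤ eta/2 := by nlinarith
      have h12 := mul_le_mul_of_nonneg_left ih hlam0
      have h13 : a (N1 + (i+1)) = a ((N1 + i) + 1) := by rw [Nat.add_succ]
      rw [h13]
      linarith [h1, h2, h12, h10, h11]
  obtain ⟨N2, hN2⟩ := (Metric.tendsto_atTop.mp
    (show Tendsto (fun n => lam ^ n * a N1) atTop (𝓝 0) by
      simpa using (tendsto_pow_atTop_nhds_zero_of_lt_one hlam0 hlam1).mul_const (a N1)))
    (eta/4) (by positivity)
  refine ⟨N1 + N2, fun n hn => ?_⟩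
  have h5 : n = N1 + (n - N1) := by omega
  have h6 : N2 ≤ n - N1 := by omega
  have h7 := hkey (n - N1)
  have h8 := hN2 (n - N1) h6
  rw [Real.dist_eq, sub_zero] at h8 ⊢
  rw [abs_of_nonneg (ha n)]
  have h9 : lam ^ (n - N1) * a N1 ≤ |lam ^ (n - N1) * a N1| := le_abs_self _
  rw [← h5] at h7
  have h8' : |lam ^ (n - N1) * a N1| < eta / 4 := h8
  linarith

set_option maxHeartbeats 2000000 in
/-- For every k ≥ 1 and every p ∈ Δ_k, the iterates F^n(p) converge to a point
of the closed simplex. -/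
theorem iterates_converge (k : ℕ) (hk : 1 ≤ k) (p : Fin (k + 1) → ℝ)
    (hp : p ∈ simplex k) :
    ∃ l : Fin (k + 1) → ℝ, ((∑ i, l i) = 1 ∧ ∀ i, 0 ≤ l i) ∧
      Tendsto (fun n => (Fmap k)^[n] p) atTop (𝓝 l) := by
  classical
  obtain ⟨hpsum, hppos⟩ := hp
  set X : ℕ → Fin (k+1) → ℝ := fun n => (Fmap k)^[n] p with hXdef
  have hX0 : X 0 = p := rfl
  have hXs : ∀ n, X (n+1) = Fmap k (X n) := fun n => Function.iterate_succ_apply' _ n p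
  have hpos : ∀ n i, 0 < X n i := by
    intro n
    induction n with
    | zero => exact hppos
    | succ n ih => intro i; rw [hXs]; exact Fmap_pos k ih i
  have hsum : ∀ n, ∑ i, X n i = 1 := by
    intro n
    induction n with
    | zero => exact hpsum
    | succ n ih => rw [hXs, Fmap_sum, ih]; norm_num
  set t : ℕ → ℝ := fun n => X n (Fin.last k) with htdef
  have htpos : ∀ n, 0 < t n := fun n => hpos n _
  have hstep : ∀ n (j : Fin (k+1)), j.val < k →
      X (n+1) j = X n j * (X n j + 2 * t n) := by
    intro n j hj
    rw [hXs]
    show (if j.val < k then X n j ^ 2 + 2 * X n j * X n (Fin.last k) else _) = _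
    rw [if_pos hj]; ring
  set Sk : Finset (Fin (k+1)) := Finset.univ.filter (fun i => i.val < k) with hSkdef
  have hSkmem : ∀ i : Fin (k+1), i ∈ Sk ↔ i.val < k := by
    intro i; simp [hSkdef]
  have hSkcard : Sk.card = k := by
    have herase : Sk = Finset.univ.erase (Fin.last k) := by
      ext i
      simp only [hSkdef, Finset.mem_filter, Finset.mem_univ, true_and, Finset.mem_erase,
        and_true, Ne, Fin.ext_iff, Fin.val_last]
      have := i.isLt
      omega
    rw [herase, Finset.card_erase_of_mem (Finset.mem_univ _), Finset.card_univ,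
      Fintype.card_fin]
    omega
  have hSkne : Sk.Nonempty := ⟨⟨0, by omega⟩, by rw [hSkmem]; simpa using (show 0 < k by omega)⟩
  obtain ⟨i0, hi0Sk, hi0max⟩ := Finset.exists_max_image Sk p hSkne
  have hi0k : i0.val < k := (hSkmem i0).mp hi0Sk
  set m : ℕ → ℝ := fun n => X n i0 with hmdef
  have hmstep : ∀ n, m (n+1) = m n * (m n + 2 * t n) := fun n => hstep n i0 hi0k
  have hmax : ∀ n j, j.val < k → X n j ≤ m n := by
    intro n
    induction n with
    | zero => intro j hj; exact hi0max j ((hSkmem j).mpr hj)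
    | succ n ih =>
      intro j hj
      rw [hstep n j hj, hmstep n]
      have h1 := ih j hj
      have h2 := (hpos n j).le
      have h3 := (htpos n).le
      nlinarith
  have htop : ∀ n j, j.val < k → p j = p i0 → X n j = m n := by
    intro n
    induction n with
    | zero => intro j hj hpj; exact hpj
    | succ n ih => intro j hj hpj; rw [hstep n j hj, hmstep n, ih j hj hpj]
  set u : ℕ → ℝ := fun n => ∑ j ∈ Sk, X n j with hudef
  have hut : ∀ n, u n + t n = 1 := by
    intro n
    have h1 := sum_split k (X n)
    rw [hsum n] at h1
    have h2 : u n = ∑ i : Fin (k+1), if i.val < k then X n i else 0 := by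
      rw [hudef, hSkdef]; exact Finset.sum_filter _ _
    rw [h2]
    linarith [h1]
  have hupos : ∀ n, 0 < u n := fun n => Finset.sum_pos (fun j _ => hpos n j) hSkne
  have hult : ∀ n, u n < 1 := fun n => by linarith [hut n, htpos n]
  have htlt : ∀ n, t n < 1 := fun n => by linarith [hut n, hupos n]
  have hk1 : (1:ℝ) ≤ (k:ℝ) := by exact_mod_cast hk
  have hQ : ∀ n, (u n)^2 ≤ (k:ℝ) * ∑ j ∈ Sk, (X n j)^2 := by
    intro n
    have h := Finset.sum_mul_sq_le_sq_mul_sq Sk (fun _ => (1:ℝ)) (fun j => X n j)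
    simpa [hSkcard] using h
  have hurec : ∀ n, u (n+1) = 2 * t n * u n + ∑ j ∈ Sk, (X n j)^2 := by
    intro n
    have h1 : ∀ j ∈ Sk, X (n+1) j = X n j ^ 2 + 2 * t n * X n j := by
      intro j hj; rw [hstep n j ((hSkmem j).mp hj)]; ring
    calc u (n+1) = ∑ j ∈ Sk, (X n j ^ 2 + 2 * t n * X n j) := Finset.sum_congr rfl h1
      _ = 2 * t n * u n + ∑ j ∈ Sk, (X n j)^2 := by
          rw [Finset.sum_add_distrib, hudef, ← Finset.mul_sum]; ring
  set δ : ℝ := min (u 0) (1 / (k:ℝ)) with hδdef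
  have hδpos : 0 < δ := lt_min (hupos 0) (by positivity)
  have hδle : δ ≤ 1/(k:ℝ) := min_le_right _ _
  have hδu : ∀ n, δ ≤ u n := by
    intro n
    induction n with
    | zero => exact min_le_left _ _
    | succ n ih =>
      have h1 := hurec n
      have h2 := hQ n
      have h3 := hut n
      have h4 := hupos n
      have h5 := hult n
      have h6 := htpos n
      rcases le_or_gt ((2*(k:ℝ) - 1) * u n) (k:ℝ) with hc | hc
      · have h7 : u n ≤ u (n+1) := by nlinarith
        linarith
      · have h7 : 1/(k:ℝ) ≤ u (n+1) := by
          rw [div_le_iff₀ (by positivity)]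
          nlinarith
        linarith
  have hmu : ∀ n, u n ≤ (k:ℝ) * m n := by
    intro n
    have h := Finset.sum_le_card_nsmul Sk (fun j => X n j) (m n)
      (fun j hj => hmax n j ((hSkmem j).mp hj))
    rw [hSkcard] at h
    simpa [nsmul_eq_mul] using h
  set d : ℝ := δ / (k:ℝ) with hddef
  have hdpos : 0 < d := by positivity
  have hdm : ∀ n, d ≤ m n := by
    intro n
    rw [hddef, div_le_iff₀ (by positivity : (0:ℝ) < (k:ℝ))]
    nlinarith [hδu n, hmu n]
  have hmt1 : ∀ n, m n + t n ≤ 1 := by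
    intro n
    have h : m n ≤ u n := Finset.single_le_sum (fun j _ => (hpos n j).le) hi0Sk
    linarith [hut n]
  have hm1 : ∀ n, m n ≤ 1 := fun n => by linarith [hmt1 n, htpos n]
  have hd1 : d ≤ 1 := by
    have := hdm 0
    linarith [hm1 0]
  have hdecay : ∀ j : Fin (k+1), j.val < k → p j ≠ p i0 →
      ∃ γ C : ℝ, 0 ≤ γ ∧ γ < 1 ∧ ∀ n, X n j ≤ C * γ ^ n := by
    intro j hj hne
    have hρlt : p j / p i0 < 1 :=
      (div_lt_one (hppos i0)).mpr (lt_of_le_of_ne (hi0max j ((hSkmem j).mpr hj)) hne)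
    set ρ : ℝ := p j / p i0 with hρdef
    have hρ0 : 0 ≤ ρ := (div_pos (hppos j) (hppos i0)).le
    set γ : ℝ := 1 - d * (1 - ρ) / 2 with hγdef
    have hγ0 : 0 ≤ γ := by
      rw [hγdef]
      nlinarith [mul_nonneg (by linarith : (0:ℝ) ≤ 1 - d) (by linarith : (0:ℝ) ≤ 1 - ρ), hdpos]
    have hγ1 : γ < 1 := by
      rw [hγdef]
      nlinarith [mul_pos hdpos (by linarith : (0:ℝ) < 1 - ρ)]
    have hmain : ∀ n, X n j ≤ γ ^ n * ρ * m n := by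
      intro n
      induction n with
      | zero =>
        simp only [pow_zero, one_mul]
        have hm0 : m 0 = p i0 := rfl
        have hx0 : X 0 j = p j := rfl
        rw [hm0, hx0, hρdef, div_mul_cancel₀ _ (ne_of_gt (hppos i0))]
      | succ n ih =>
        have hγn1 : γ ^ n ≤ 1 := pow_le_one₀ hγ0 hγ1.le
        have hγnn : 0 ≤ γ ^ n := pow_nonneg hγ0 n
        have h1 : X n j ≤ ρ * m n := by
          nlinarith [ih, mul_nonneg (mul_nonneg (by linarith : (0:ℝ) ≤ 1 - γ ^ n) hρ0)
            (by linarith [hdm n, hdpos] : (0:ℝ) ≤ m n)]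
        have hb : X n j + 2 * t n ≤ γ * (m n + 2 * t n) := by
          have hh1 : 0 ≤ (1 - ρ) * (m n - d) :=
            mul_nonneg (by linarith) (by linarith [hdm n])
          have hh2 : 0 ≤ d * (1 - ρ) * (2 - (m n + 2 * t n)) :=
            mul_nonneg (mul_nonneg hdpos.le (by linarith))
              (by linarith [hmt1 n, htlt n])
          rw [hγdef]
          nlinarith [h1]
        rw [hstep n j hj, hmstep n]
        calc X n j * (X n j + 2 * t n) ≤ (γ ^ n * ρ * m n) * (X n j + 2 * t n) := by
              apply mul_le_mul_of_nonneg_right ih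
              nlinarith [hpos n j, htpos n]
          _ ≤ (γ ^ n * ρ * m n) * (γ * (m n + 2 * t n)) := by
              exact mul_le_mul_of_nonneg_left hb
                (mul_nonneg (mul_nonneg hγnn hρ0) (by linarith [hdm n, hdpos]))
          _ = γ ^ (n+1) * ρ * (m n * (m n + 2 * t n)) := by ring
    refine ⟨γ, ρ, hγ0, hγ1, fun n => le_trans (hmain n) ?_⟩
    have hγnn : 0 ≤ γ ^ n := pow_nonneg hγ0 n
    nlinarith [mul_nonneg (mul_nonneg hγnn hρ0) (by linarith [hm1 n] : (0:ℝ) ≤ 1 - m n)]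
  set TOP : Finset (Fin (k+1)) := Sk.filter (fun j => p j = p i0) with hTOPdef
  set NT : Finset (Fin (k+1)) := Sk.filter (fun j => ¬ p j = p i0) with hNTdef
  set c : ℕ := TOP.card with hcdef
  have hi0TOP : i0 ∈ TOP := by rw [hTOPdef, Finset.mem_filter]; exact ⟨hi0Sk, rfl⟩
  have hc1 : 1 ≤ c := Finset.card_pos.mpr ⟨i0, hi0TOP⟩
  have hcr : (1:ℝ) ≤ (c:ℝ) := by exact_mod_cast hc1
  set s : ℕ → ℝ := fun n => ∑ j ∈ NT, X n j with hsdef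
  have hsnn : ∀ n, 0 ≤ s n := fun n => Finset.sum_nonneg fun j _ => (hpos n j).le
  have husplit : ∀ n, u n = (c:ℝ) * m n + s n := by
    intro n
    have h1 : ∀ j ∈ TOP, X n j = m n := by
      intro j hj
      rw [hTOPdef, Finset.mem_filter] at hj
      exact htop n j ((hSkmem j).mp hj.1) hj.2
    have h2 : ∑ j ∈ TOP, X n j = (c:ℝ) * m n := by
      rw [Finset.sum_congr rfl h1, Finset.sum_const, nsmul_eq_mul, hcdef]
    rw [hudef]
    show ∑ j ∈ Sk, X n j = _
    rw [← Finset.sum_filter_add_sum_filter_not Sk (fun j => p j = p i0) (fun j => X n j)]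
    rw [← hTOPdef, ← hNTdef, h2]
  have hstend : Tendsto s atTop (𝓝 0) := by
    have h1 : ∀ j ∈ NT, Tendsto (fun n => X n j) atTop (𝓝 0) := by
      intro j hj
      rw [hNTdef, Finset.mem_filter] at hj
      obtain ⟨γ, C, hγ0, hγ1, hbd⟩ := hdecay j ((hSkmem j).mp hj.1) hj.2
      apply squeeze_zero (fun n => (hpos n j).le) hbd
      simpa using (tendsto_pow_atTop_nhds_zero_of_lt_one hγ0 hγ1).const_mul C
    have h2 := tendsto_finset_sum NT h1
    simpa using h2
  set ms : ℝ := 1 / (2*(c:ℝ) - 1) with hmsdef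
  have h2c : (1:ℝ) ≤ 2*(c:ℝ) - 1 := by linarith
  have h2cne : (2*(c:ℝ) - 1) ≠ 0 := by linarith
  have hmspos : 0 < ms := by rw [hmsdef]; positivity
  have hms1 : (2*(c:ℝ)-1) * ms = 1 := by rw [hmsdef]; field_simp
  have hmrec : ∀ n, m (n+1) = ms - ((2*(c:ℝ)-1) * (m n - ms)^2 + 2 * m n * s n) := by
    intro n
    have h1 : m (n+1) = m n * (m n + 2 * t n) := hmstep n
    have h2 : t n = 1 - ((c:ℝ) * m n + s n) := by
      rw [← husplit n]; linarith [hut n]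
    rw [h1, h2, hmsdef]
    field_simp
    ring
  have hmle : ∀ n, m (n+1) ≤ ms := by
    intro n
    rw [hmrec n]
    nlinarith [hsnn n, hdm n, sq_nonneg (m n - ms), hdpos, h2c]
  set lam : ℝ := max 0 (1 - (2*(c:ℝ)-1) * d) with hlamdef
  have hlam0 : 0 ≤ lam := le_max_left _ _
  have hlam1 : lam < 1 := max_lt one_pos (by nlinarith)
  set A : ℕ → ℝ := fun n => ms - m (n+1) with hAdef
  have hAnn : ∀ n, 0 ≤ A n := fun n => by
    simp only [hAdef]; linarith [hmle n]
  have hArec : ∀ n, A (n+1) ≤ lam * A n + 2 * s (n+1) := by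
    intro n
    have h2 : A (n+1) = (2*(c:ℝ)-1) * (A n)^2 + 2 * m (n+1) * s (n+1) := by
      simp only [hAdef]
      rw [hmrec (n+1)]
      ring
    have h3 : (2*(c:ℝ)-1) * A n ≤ lam := by
      have hAub : A n ≤ ms - d := by
        simp only [hAdef]; linarith [hdm (n+1)]
      have h4 : (2*(c:ℝ)-1) * A n ≤ (2*(c:ℝ)-1) * (ms - d) :=
        mul_le_mul_of_nonneg_left hAub (by linarith)
      have h5 : (2*(c:ℝ)-1) * (ms - d) = 1 - (2*(c:ℝ)-1)*d := by
        rw [mul_sub, hms1]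
      rw [h5] at h4
      exact h4.trans (le_max_right _ _)
    have h5 : (2*(c:ℝ)-1) * (A n)^2 ≤ lam * A n := by
      nlinarith [hAnn n, h3]
    have h6 : 2 * m (n+1) * s (n+1) ≤ 2 * s (n+1) := by
      nlinarith [hsnn (n+1), hm1 (n+1)]
    linarith [h2, h5, h6]
  have hAtend : Tendsto A atTop (𝓝 0) := by
    apply aux_decay hlam0 hlam1 hAnn hArec
    have h1 : Tendsto (fun n => s (n+1)) atTop (𝓝 0) :=
      (tendsto_add_atTop_iff_nat 1).mpr hstend
    simpa using h1.const_mul 2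
  have hmtend : Tendsto m atTop (𝓝 ms) := by
    have h1 : Tendsto (fun n => m (n+1)) atTop (𝓝 ms) := by
      have h2 : (fun n => m (n+1)) = fun n => ms - A n := by
        funext n; simp only [hAdef]; ring
      rw [h2]
      simpa using tendsto_const_nhds.sub hAtend
    exact (tendsto_add_atTop_iff_nat 1).mp h1
  set l : Fin (k+1) → ℝ := fun i =>
    if i.val < k then (if p i = p i0 then ms else 0) else 1 - (c:ℝ) * ms with hldef
  have hcms : (c:ℝ) * ms ≤ 1 := by
    rw [hmsdef, mul_one_div, div_le_one (by linarith)]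
    linarith
  refine ⟨l, ⟨?_, ?_⟩, ?_⟩
  · rw [sum_split k l]
    have hlast : l (Fin.last k) = 1 - (c:ℝ) * ms := by
      simp [hldef]
    have h1 : (∑ i : Fin (k+1), if i.val < k then l i else 0) = ∑ j ∈ Sk, l j :=
      (Finset.sum_filter _ _).symm
    have h2 : ∑ j ∈ TOP, l j = (c:ℝ) * ms := by
      have heq : ∀ j ∈ TOP, l j = ms := by
        intro j hj
        rw [hTOPdef, Finset.mem_filter] at hj
        simp only [hldef, if_pos ((hSkmem j).mp hj.1), if_pos hj.2]
      rw [Finset.sum_congr rfl heq, Finset.sum_const, nsmul_eq_mul, hcdef]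
    have h3 : ∑ j ∈ NT, l j = 0 := by
      apply Finset.sum_eq_zero
      intro j hj
      rw [hNTdef, Finset.mem_filter] at hj
      simp only [hldef, if_pos ((hSkmem j).mp hj.1), if_neg hj.2]
    rw [h1, ← Finset.sum_filter_add_sum_filter_not Sk (fun j => p j = p i0) l,
      ← hTOPdef, ← hNTdef, h2, h3, hlast]
    ring
  · intro i
    simp only [hldef]
    split_ifs
    · exact hmspos.le
    · exact le_refl 0
    · linarith
  · rw [tendsto_pi_nhds]
    intro i
    by_cases hik : i.val < k
    · by_cases hpt : p i = p i0
      · have heq : ∀ n, X n i = m n := fun n => htop n i hik hpt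
        have hli : l i = ms := by simp only [hldef, if_pos hik, if_pos hpt]
        rw [hli]
        exact hmtend.congr (fun n => (heq n).symm)
      · obtain ⟨γ, C, hγ0, hγ1, hbd⟩ := hdecay i hik hpt
        have hli : l i = 0 := by simp only [hldef, if_pos hik, if_neg hpt]
        rw [hli]
        exact squeeze_zero (fun n => (hpos n i).le) hbd
          (by simpa using (tendsto_pow_atTop_nhds_zero_of_lt_one hγ0 hγ1).const_mul C)
    · have hilast : i = Fin.last k := by
        have := i.isLt
        exact Fin.ext (by simp [Fin.val_last]; omega)
      subst hilast
      have hXl : ∀ n, X n (Fin.last k) = 1 - ((c:ℝ) * m n + s n) := by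
        intro n
        have h1 := hut n
        have h2 := husplit n
        show t n = _
        linarith
      have hli : l (Fin.last k) = 1 - (c:ℝ) * ms := by
        simp [hldef]
      rw [hli]
      have h1 : Tendsto (fun n => 1 - ((c:ℝ) * m n + s n)) atTop
          (𝓝 (1 - ((c:ℝ) * ms + 0))) :=
        tendsto_const_nhds.sub ((hmtend.const_mul _).add hstend)
      have h2 := h1.congr (fun n => (hXl n).symm)
      simpa using h2
end

section
/- Let k ≥ 1 and p ∈ Δ_k with p_1 = p_2 = … = p_k. Then F^n(p) converges, as n → ∞, to the vector (1/(2k−1), …, 1/(2k−1), (k−1)/(2k−1)), whose first k coordinates equal 1/(2k−1) and whose last coordinate equals (k−1)/(2k−1). -/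
open Filter Topology

lemma pair_count (k : ℕ) :
    ∑ a : Fin (k+1), ∑ b : Fin (k+1),
      (if a.val < b.val ∧ b.val < k then (1:ℝ) else 0)
      = ∑ i ∈ Finset.range k, (i:ℝ) := by
  rw [Fin.sum_univ_eq_sum_range (fun A => ∑ b : Fin (k+1), (if A < b.val ∧ b.val < k then (1:ℝ) else 0))]
  have h1 : ∀ A : ℕ, (∑ b : Fin (k+1), (if A < b.val ∧ b.val < k then (1:ℝ) else 0))
      = ∑ B ∈ Finset.range (k+1), (if A < B ∧ B < k then (1:ℝ) else 0) := fun A =>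
    Fin.sum_univ_eq_sum_range (fun B => if A < B ∧ B < k then (1:ℝ) else 0) (k+1)
  simp_rw [h1]
  rw [Finset.sum_comm]
  have h2 : ∀ B ∈ Finset.range (k+1),
      (∑ A ∈ Finset.range (k+1), (if A < B ∧ B < k then (1:ℝ) else 0))
      = if B < k then (B:ℝ) else 0 := by
    intro B hB
    by_cases hBk : B < k
    · simp only [hBk, and_true, if_true]
      rw [Finset.sum_boole]
      have : (Finset.range (k+1)).filter (· < B) = Finset.range B := by
        ext x; simp; omega
      simp [this]
    · simp [hBk]
  rw [Finset.sum_congr rfl h2, Finset.sum_range_succ]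
  simp only [lt_irrefl, if_false, add_zero]
  exact Finset.sum_congr rfl fun B hB => by simp [Finset.mem_range.mp hB]

lemma gauss (k : ℕ) (hk : 1 ≤ k) :
    2 * ∑ i ∈ Finset.range k, (i:ℝ) = (k:ℝ) * ((k:ℝ) - 1) := by
  have := Finset.sum_range_id_mul_two k
  have : ((∑ i ∈ Finset.range k, i) * 2 : ℕ) = (k * (k-1) : ℕ) := this
  have h := congrArg (fun n : ℕ => (n : ℝ)) this
  push_cast [Nat.cast_sub hk] at h
  linarith

/-- the equal-coordinates vector -/
noncomputable def evec (k : ℕ) (t : ℝ) : Fin (k+1) → ℝ :=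
  fun i => if i.val < k then t else 1 - k * t

lemma Fmap_evec (k : ℕ) (hk : 1 ≤ k) (t : ℝ) :
    Fmap k (evec k t) = evec k (2 * t - (2 * k - 1) * t ^ 2) := by
  have hlast : (Fin.last k).val = k := rfl
  have hS : ∑ a : Fin (k+1), ∑ b : Fin (k+1),
      (if a.val < b.val ∧ b.val < k then evec k t a * evec k t b else 0)
      = t ^ 2 * ∑ i ∈ Finset.range k, (i:ℝ) := by
    rw [← pair_count k, Finset.mul_sum]
    refine Finset.sum_congr rfl fun a _ => ?_
    rw [Finset.mul_sum]
    refine Finset.sum_congr rfl fun b _ => ?_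
    by_cases h : a.val < b.val ∧ b.val < k
    · rw [if_pos h, if_pos h]
      have ha : a.val < k := lt_trans h.1 h.2
      simp [evec, ha, h.2]; ring
    · rw [if_neg h, if_neg h, mul_zero]
  funext i
  by_cases hi : i.val < k
  · have hL : ¬ (Fin.last k).val < k := by simp [hlast]
    simp only [Fmap, evec, hi, if_true, hL, if_false]
    ring
  · have hev : evec k t (Fin.last k) = 1 - k * t := by
      simp [evec, hlast]
    simp only [Fmap, hi, if_false]
    rw [hS, hev, show evec k (2 * t - (2 * k - 1) * t ^ 2) i
        = 1 - k * (2 * t - (2 * k - 1) * t ^ 2) from if_neg hi]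
    have := gauss k hk
    nlinarith [this]

/-- If p_1 = ⋯ = p_k then F^n(p) → (1/(2k−1),…,1/(2k−1),(k−1)/(2k−1)). -/
theorem tendsto_of_all_equal (k : ℕ) (hk : 1 ≤ k) (p : Fin (k + 1) → ℝ)
    (hp : p ∈ simplex k)
    (heq : ∀ a b : Fin (k + 1), a.val < k → b.val < k → p a = p b) :
    Tendsto (fun n => (Fmap k)^[n] p) atTop
      (𝓝 (fun j => if j.val < k then 1 / (2 * (k : ℝ) - 1)
                    else ((k : ℝ) - 1) / (2 * (k : ℝ) - 1))) := by
  obtain ⟨hsum, hpos⟩ := hp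
  set c : ℝ := 2 * k - 1 with hc
  have hk1 : (1:ℝ) ≤ (k:ℝ) := by exact_mod_cast hk
  have hcpos : 0 < c := by simp only [hc]; linarith
  have hz : (0 : Fin (k+1)).val < k := by
    simp [Fin.val_zero]; omega
  set t₀ : ℝ := p 0 with ht₀
  -- p = evec k t₀
  have hplast : p (Fin.last k) = 1 - k * t₀ := by
    have hs : ∑ i : Fin (k+1), p i
        = (∑ i : Fin k, p i.castSucc) + p (Fin.last k) := Fin.sum_univ_castSucc p
    have hcs : ∀ i : Fin k, p i.castSucc = t₀ := fun i =>
      heq i.castSucc 0 i.isLt hz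
    rw [hsum] at hs
    rw [Finset.sum_congr rfl (fun i _ => hcs i), Finset.sum_const,
      Finset.card_univ, Fintype.card_fin, nsmul_eq_mul] at hs
    linarith
  have hpe : p = evec k t₀ := by
    funext i
    by_cases hi : i.val < k
    · rw [evec, if_pos hi]; exact heq i 0 hi hz
    · have : i = Fin.last k := by
        apply Fin.ext; have := i.isLt; simp [Fin.last]; omega
      rw [this, evec, if_neg (by simp [Fin.last])]
      exact hplast
  -- the scalar dynamics
  set g : ℝ → ℝ := fun t => 2 * t - c * t ^ 2 with hg
  set tt : ℕ → ℝ := fun n => g^[n] t₀ with htt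
  have hiter : ∀ n, (Fmap k)^[n] p = evec k (tt n) := by
    intro n
    induction n with
    | zero => simp [tt]; exact hpe
    | succ n ih =>
        rw [Function.iterate_succ_apply', ih, Fmap_evec k hk,
          show tt (n+1) = g (tt n) from Function.iterate_succ_apply' g n t₀]
  -- convergence of tt to 1/c
  set v : ℕ → ℝ := fun n => c * tt n - 1 with hv
  have hvrec : ∀ n, v (n+1) = -(v n)^2 := by
    intro n
    have h1 : tt (n+1) = g (tt n) := Function.iterate_succ_apply' g n t₀
    simp only [hv, h1, hg]; ring
  set q : ℝ := |v 0| with hq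
  have ht0pos : 0 < t₀ := hpos 0
  have ht0lt : (k:ℝ) * t₀ < 1 := by
    have := hpos (Fin.last k); rw [hplast] at this; linarith
  have hq1 : q < 1 := by
    rw [hq, abs_lt]
    constructor
    · simp only [hv, htt, Function.iterate_zero_apply]
      nlinarith
    · simp only [hv, htt, Function.iterate_zero_apply, hc]
      nlinarith
  have hq0 : 0 ≤ q := abs_nonneg _
  have hbound : ∀ n, |v n| ≤ q ^ (n+1) := by
    intro n
    induction n with
    | zero => simp [hq]
    | succ n ih =>
        have h1 : |v n| ≤ q := le_trans ih (pow_le_of_le_one hq0 (le_of_lt hq1) (Nat.succ_ne_zero n))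
        rw [hvrec n, abs_neg, abs_pow, sq]
        calc |v n| * |v n| ≤ q ^ (n+1) * q :=
              mul_le_mul ih h1 (abs_nonneg _) (pow_nonneg hq0 _)
          _ = q ^ (n+2) := by ring
  have hvlim : Tendsto v atTop (𝓝 0) := by
    have hgeo : Tendsto (fun n : ℕ => q ^ (n+1)) atTop (𝓝 0) :=
      (tendsto_pow_atTop_nhds_zero_of_lt_one hq0 hq1).comp (tendsto_add_atTop_nat 1)
    have hneg : Tendsto (fun n : ℕ => -(q ^ (n+1))) atTop (𝓝 0) := by
      simpa using hgeo.neg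
    refine tendsto_of_tendsto_of_tendsto_of_le_of_le hneg hgeo ?_ ?_
    · intro n; have := hbound n; rw [abs_le] at this; exact this.1
    · intro n; have := hbound n; rw [abs_le] at this; exact this.2
  have httlim : Tendsto tt atTop (𝓝 (1/c)) := by
    have : Tendsto (fun n => (v n + 1) / c) atTop (𝓝 ((0 + 1)/c)) :=
      (hvlim.add_const 1).div_const c
    simp only [zero_add] at this
    convert this using 2 with n
    simp only [hv]
    field_simp
    ring
  -- assemble
  simp only [hiter]
  rw [tendsto_pi_nhds]
  intro j
  by_cases hj : j.val < k
  · simp only [evec, hj, if_true]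
    simpa using httlim
  · simp only [evec, hj, if_false]
    have : ((k:ℝ) - 1) / c = 1 - k * (1/c) := by
      field_simp; ring
    rw [this]
    have := (httlim.const_mul (k:ℝ)).const_sub 1
    simpa using this
end

section
/- Let k ≥ 2 and x ∈ Δ_k with x_1 = max_{1≤j≤k} x_j. Then F_{k+1}(x) ≥ F_2(x) + F_3(x) + … + F_k(x). More precisely, F_{k+1}(x) − Σ_{i=2}^k F_i(x) = (x_{k+1} − Σ_{i=2}^k x_i)² + 2 Σ_{i=2}^k (x_1 − x_i) x_i. -/
open Filter Topology

open Finset in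
lemma pair_sum (k : ℕ) (x : Fin (k+1) → ℝ) :
    2 * ∑ a : Fin (k + 1), ∑ b : Fin (k + 1),
        (if a.val < b.val ∧ b.val < k then x a * x b else 0)
      = (∑ i ∈ Finset.univ.filter (fun i : Fin (k+1) => i.val < k), x i) ^ 2
        - ∑ i ∈ Finset.univ.filter (fun i : Fin (k+1) => i.val < k), (x i) ^ 2 := by
  set T := Finset.univ.filter (fun i : Fin (k+1) => i.val < k) with hT
  have hmemT : ∀ i : Fin (k+1), i ∈ T ↔ i.val < k := by
    intro i; simp [hT]
  have h1 : ∀ a : Fin (k+1),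
      (∑ b : Fin (k+1), if a.val < b.val ∧ b.val < k then x a * x b else 0)
        = ∑ b ∈ T, if a.val < b.val then x a * x b else 0 := by
    intro a
    rw [Finset.sum_filter]
    apply Finset.sum_congr rfl
    intro b _
    by_cases h : b.val < k <;> by_cases h' : a.val < b.val <;> simp [h, h']
  have h2 : (∑ a : Fin (k + 1), ∑ b : Fin (k + 1),
      (if a.val < b.val ∧ b.val < k then x a * x b else 0))
      = ∑ a ∈ T, ∑ b ∈ T, (if a.val < b.val then x a * x b else 0) := by
    rw [Finset.sum_congr rfl (fun a _ => h1 a)]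
    symm
    apply Finset.sum_subset (Finset.subset_univ T)
    intro a _ ha
    apply Finset.sum_eq_zero
    intro b hb
    rw [hmemT] at hb
    rw [if_neg]
    intro hab
    exact ha ((hmemT a).2 (lt_trans hab hb))
  have hsq : (∑ i ∈ T, x i) ^ 2 = ∑ a ∈ T, ∑ b ∈ T, x a * x b := by
    rw [sq, Finset.sum_mul_sum]
  have hkey : ∀ a b : Fin (k+1), x a * x b =
      (if a.val < b.val then x a * x b else 0) +
      (if b.val < a.val then x a * x b else 0) +
      (if a = b then x a * x b else 0) := by
    intro a b
    rcases lt_trichotomy a.val b.val with h | h | h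
    · have h2 : ¬ b.val < a.val := by omega
      have h3 : a ≠ b := by intro he; rw [he] at h; omega
      simp [h, h2, h3]
    · have hab : a = b := Fin.ext h
      simp [hab]
    · have h2 : ¬ a.val < b.val := by omega
      have h3 : a ≠ b := by intro he; rw [he] at h; omega
      simp [h, h2, h3]
  have hsplit : ∑ a ∈ T, ∑ b ∈ T, x a * x b
      = (∑ a ∈ T, ∑ b ∈ T, (if a.val < b.val then x a * x b else 0))
      + (∑ a ∈ T, ∑ b ∈ T, (if b.val < a.val then x a * x b else 0))
      + (∑ a ∈ T, ∑ b ∈ T, (if a = b then x a * x b else 0)) := by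
    rw [← Finset.sum_add_distrib, ← Finset.sum_add_distrib]
    apply Finset.sum_congr rfl; intro a _
    rw [← Finset.sum_add_distrib, ← Finset.sum_add_distrib]
    exact Finset.sum_congr rfl (fun b _ => hkey a b)
  have hswap : (∑ a ∈ T, ∑ b ∈ T, (if b.val < a.val then x a * x b else 0))
      = ∑ a ∈ T, ∑ b ∈ T, (if a.val < b.val then x a * x b else 0) := by
    rw [Finset.sum_comm]
    apply Finset.sum_congr rfl; intro a _
    apply Finset.sum_congr rfl; intro b _
    by_cases h : a.val < b.val <;> simp [h, mul_comm]
  have hdiag : (∑ a ∈ T, ∑ b ∈ T, (if a = b then x a * x b else 0))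
      = ∑ a ∈ T, (x a) ^ 2 := by
    apply Finset.sum_congr rfl; intro a ha
    rw [Finset.sum_ite_eq T a (fun b => x a * x b), if_pos ha, sq]
  rw [h2, hsq, hsplit, hswap, hdiag]
  ring

/-- If x ∈ Δ_k with x_1 = max_{1≤j≤k} x_j (0-indexed: x_0 maximal among the
first k coordinates), then F_{k+1}(x) − Σ_{i=2}^k F_i(x)
= (x_{k+1} − Σ_{i=2}^k x_i)² + 2 Σ_{i=2}^k (x_1 − x_i) x_i, and in particular
F_{k+1}(x) ≥ Σ_{i=2}^k F_i(x). -/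
theorem empty_reinforces (k : ℕ) (hk : 2 ≤ k) (x : Fin (k + 1) → ℝ)
    (hx : x ∈ simplex k)
    (hmax : ∀ j : Fin (k + 1), j.val < k → x j ≤ x 0) :
    (Fmap k x (Fin.last k) -
        (∑ j : Fin (k + 1), if 1 ≤ j.val ∧ j.val < k then Fmap k x j else 0)
      = (x (Fin.last k) -
          ∑ j : Fin (k + 1), if 1 ≤ j.val ∧ j.val < k then x j else 0) ^ 2
        + 2 * ∑ j : Fin (k + 1),
            (if 1 ≤ j.val ∧ j.val < k then (x 0 - x j) * x j else 0)) ∧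
    (∑ j : Fin (k + 1), if 1 ≤ j.val ∧ j.val < k then Fmap k x j else 0)
      ≤ Fmap k x (Fin.last k) := by
  classical
  set T : Finset (Fin (k+1)) := Finset.univ.filter (fun i : Fin (k+1) => i.val < k) with hTdef
  set T1 : Finset (Fin (k+1)) :=
    Finset.univ.filter (fun i : Fin (k+1) => 1 ≤ i.val ∧ i.val < k) with hT1def
  have h0val : ((0 : Fin (k+1)) : ℕ) = 0 := rfl
  have h0T1 : (0 : Fin (k+1)) ∉ T1 := by simp [hT1def]
  have hTins : T = insert 0 T1 := by
    ext i
    simp only [hTdef, hT1def, Finset.mem_filter, Finset.mem_univ, true_and,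
      Finset.mem_insert]
    constructor
    · intro hi
      rcases Nat.eq_zero_or_pos i.val with h | h
      · left; exact Fin.ext (by simp [h])
      · right; exact ⟨h, hi⟩
    · rintro (rfl | ⟨h1, h2⟩)
      · omega
      · exact h2
  set S : ℝ := ∑ j ∈ T1, x j with hS
  set Q : ℝ := ∑ j ∈ T1, (x j) ^ 2 with hQ
  set L : ℝ := x (Fin.last k) with hL
  -- sums over T
  have hTx : ∑ i ∈ T, x i = x 0 + S := by
    rw [hTins, Finset.sum_insert h0T1]
  have hTx2 : ∑ i ∈ T, (x i) ^ 2 = (x 0) ^ 2 + Q := by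
    rw [hTins, Finset.sum_insert h0T1]
  -- pair sum
  have hP := pair_sum k x
  rw [hTx, hTx2] at hP
  -- last coordinate of Fmap
  have hlast : Fmap k x (Fin.last k) = L ^ 2 +
      2 * ∑ a : Fin (k + 1), ∑ b : Fin (k + 1),
        (if a.val < b.val ∧ b.val < k then x a * x b else 0) := by
    simp [Fmap, hL]
  -- sum of Fmap over middle coordinates
  have hFsum : (∑ j : Fin (k + 1), if 1 ≤ j.val ∧ j.val < k then Fmap k x j else 0)
      = Q + 2 * L * S := by
    rw [← Finset.sum_filter]
    have : ∀ j ∈ T1, Fmap k x j = (x j) ^ 2 + 2 * L * x j := by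
      intro j hj
      simp only [hT1def, Finset.mem_filter] at hj
      simp only [Fmap, if_pos hj.2.2, hL]
      ring
    rw [Finset.sum_congr rfl this, Finset.sum_add_distrib, ← Finset.mul_sum, ← hS, ← hQ]
  have hxsum : (∑ j : Fin (k + 1), if 1 ≤ j.val ∧ j.val < k then x j else 0) = S := by
    rw [← Finset.sum_filter, ← hS]
  have hcross : (∑ j : Fin (k + 1),
      (if 1 ≤ j.val ∧ j.val < k then (x 0 - x j) * x j else 0)) = x 0 * S - Q := by
    rw [← Finset.sum_filter]
    have : ∀ j ∈ T1, (x 0 - x j) * x j = x 0 * x j - (x j) ^ 2 := by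
      intro j _; ring
    rw [Finset.sum_congr rfl this, Finset.sum_sub_distrib, ← Finset.mul_sum, ← hS, ← hQ]
  have hcnn : (0:ℝ) ≤ ∑ j : Fin (k + 1),
      (if 1 ≤ j.val ∧ j.val < k then (x 0 - x j) * x j else 0) := by
    apply Finset.sum_nonneg
    intro j _
    split_ifs with h
    · exact mul_nonneg (sub_nonneg.2 (hmax j h.2)) (hx.2 j).le
    · exact le_rfl
  have key : Fmap k x (Fin.last k) -
      (∑ j : Fin (k + 1), if 1 ≤ j.val ∧ j.val < k then Fmap k x j else 0)
      = (L - S) ^ 2 + 2 * (x 0 * S - Q) := by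
    rw [hlast, hFsum]
    linear_combination hP
  rw [hcross] at hcnn
  constructor
  · rw [hxsum, hcross]; exact key
  · nlinarith [key, hcnn, sq_nonneg (L - S)]
end

section
/- Let k ≥ 2, and for x ∈ Δ_k set z(x) = x_{k+1} − Σ_{i=2}^k x_i. If x ∈ Δ_k satisfies x_1 = max_{1≤j≤k} x_j, then z(F(x)) = z(x)² + 2 Σ_{i=2}^k (x_1 − x_i) x_i, and in particular z(F(x)) ≥ z(x)². -/
open Filter Topology

/-- z(x) = x_{k+1} − Σ_{i=2}^k x_i (0-indexed: last coordinate minus the sum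
of coordinates 1,…,k−1). -/
noncomputable def zfun (k : ℕ) (x : Fin (k + 1) → ℝ) : ℝ :=
  x (Fin.last k) - ∑ j : Fin (k + 1), if 1 ≤ j.val ∧ j.val < k then x j else 0

private lemma sq_sum_aux {n : ℕ} (s : Finset (Fin n)) (f : Fin n → ℝ) :
    (∑ i ∈ s, f i) ^ 2
      = ∑ i ∈ s, f i ^ 2 + 2 * ∑ i ∈ s, ∑ j ∈ s, (if i < j then f i * f j else 0) := by
  have h : (∑ i ∈ s, f i) * (∑ j ∈ s, f j) = ∑ i ∈ s, ∑ j ∈ s, f i * f j :=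
    Finset.sum_mul_sum s s f f
  have hsplit : ∑ i ∈ s, ∑ j ∈ s, f i * f j
      = (∑ i ∈ s, ∑ j ∈ s, (if i < j then f i * f j else 0))
        + (∑ i ∈ s, ∑ j ∈ s, (if j < i then f i * f j else 0))
        + (∑ i ∈ s, ∑ j ∈ s, (if i = j then f i * f j else 0)) := by
    rw [← Finset.sum_add_distrib, ← Finset.sum_add_distrib]
    refine Finset.sum_congr rfl fun i _ => ?_
    rw [← Finset.sum_add_distrib, ← Finset.sum_add_distrib]
    refine Finset.sum_congr rfl fun j _ => ?_
    rcases lt_trichotomy i j with hij | hij | hij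
    · simp [hij, ne_of_lt hij, asymm hij]
    · simp [hij, lt_irrefl]
    · simp [hij, ne_of_gt hij, asymm hij]
  have hswap : (∑ i ∈ s, ∑ j ∈ s, (if j < i then f i * f j else 0))
      = ∑ i ∈ s, ∑ j ∈ s, (if i < j then f i * f j else 0) := by
    rw [Finset.sum_comm]
    refine Finset.sum_congr rfl fun i _ => Finset.sum_congr rfl fun j _ => ?_
    rw [mul_comm]
  have hdiag : (∑ i ∈ s, ∑ j ∈ s, (if i = j then f i * f j else 0))
      = ∑ i ∈ s, f i ^ 2 := by
    refine Finset.sum_congr rfl fun i hi => ?_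
    rw [Finset.sum_ite_eq s i (fun j => f i * f j)]
    simp [hi, sq]
  calc (∑ i ∈ s, f i) ^ 2 = (∑ i ∈ s, f i) * (∑ j ∈ s, f j) := sq _
    _ = _ := by rw [h, hsplit, hswap, hdiag]; ring

/-- If x ∈ Δ_k with x_1 = max_{1≤j≤k} x_j, then
z(F(x)) = z(x)² + 2 Σ_{i=2}^k (x_1 − x_i) x_i; in particular z(F(x)) ≥ z(x)². -/
theorem zfun_recursion (k : ℕ) (hk : 2 ≤ k) (x : Fin (k + 1) → ℝ)
    (hx : x ∈ simplex k)
    (hmax : ∀ j : Fin (k + 1), j.val < k → x j ≤ x 0) :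
    zfun k (Fmap k x)
      = zfun k x ^ 2 + 2 * ∑ j : Fin (k + 1),
          (if 1 ≤ j.val ∧ j.val < k then (x 0 - x j) * x j else 0) ∧
    zfun k x ^ 2 ≤ zfun k (Fmap k x) := by
  obtain ⟨hsum, hpos⟩ := hx
  set L := x (Fin.last k) with hL
  set s : Finset (Fin (k + 1)) := Finset.univ.filter (fun j => j.val < k) with hs
  set s1 : Finset (Fin (k + 1)) := Finset.univ.filter (fun j => 1 ≤ j.val ∧ j.val < k) with hs1
  set S := ∑ j ∈ s1, x j with hS
  set Q := ∑ j ∈ s1, x j ^ 2 with hQ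
  have h0k : (0 : Fin (k+1)).val < k := by simp; omega
  have hlastk : ¬ (Fin.last k).val < k := by simp
  -- zfun x = L - S
  have hz : zfun k x = L - S := by
    rw [zfun, ← hL, hS, hs1, Finset.sum_filter]
  -- sums over s split off the 0 coordinate
  have hsplit0 : ∀ f : Fin (k+1) → ℝ,
      ∑ j ∈ s, f j = f 0 + ∑ j ∈ s1, f j := by
    intro f
    rw [hs, hs1, Finset.sum_filter, Finset.sum_filter]
    have h0 : f 0 = ∑ j : Fin (k+1), (if j = 0 then f j else 0) := by
      rw [Finset.sum_ite_eq' Finset.univ 0 f]; simp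
    rw [h0, ← Finset.sum_add_distrib]
    refine Finset.sum_congr rfl fun j _ => ?_
    by_cases h2 : j = 0
    · subst h2
      have hcond : ¬ (1 ≤ (0 : Fin (k+1)).val ∧ (0 : Fin (k+1)).val < k) := by
        simp
      rw [if_pos h0k, if_pos rfl, if_neg hcond, add_zero]
    · have hv : (j : ℕ) ≠ 0 := fun h => h2 (Fin.ext h)
      rw [if_neg h2, zero_add]
      split_ifs with h1 h3 h3 <;> first | rfl | omega
  have hT : ∑ j ∈ s, x j = x 0 + S := hsplit0 x
  have hQ' : ∑ j ∈ s, x j ^ 2 = x 0 ^ 2 + Q := hsplit0 (fun j => x j ^ 2)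
  -- the double sum
  have hD : ∑ a : Fin (k + 1), ∑ b : Fin (k + 1),
      (if a.val < b.val ∧ b.val < k then x a * x b else 0)
      = ∑ a ∈ s, ∑ b ∈ s, (if a < b then x a * x b else 0) := by
    rw [hs, Finset.sum_filter]
    refine Finset.sum_congr rfl fun a _ => ?_
    rw [Finset.sum_filter]
    by_cases ha : a.val < k
    · simp only [ha, if_true]
      refine Finset.sum_congr rfl fun b _ => ?_
      by_cases hb : b.val < k
      · simp only [hb, and_true, if_true, Fin.lt_def]
      · simp only [hb, and_false, if_false]
    · simp only [ha, if_false]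
      refine Finset.sum_eq_zero fun b _ => ?_
      have : ¬ (a.val < b.val ∧ b.val < k) := by omega
      exact if_neg this
  have hsq : (∑ j ∈ s, x j) ^ 2
      = ∑ j ∈ s, x j ^ 2
        + 2 * ∑ a ∈ s, ∑ b ∈ s, (if a < b then x a * x b else 0) :=
    sq_sum_aux s x
  -- value of zfun (Fmap k x)
  have hFsum : (∑ j : Fin (k + 1), if 1 ≤ j.val ∧ j.val < k then Fmap k x j else 0)
      = Q + 2 * L * S := by
    rw [← Finset.sum_filter, ← hs1]
    have : ∀ j ∈ s1, Fmap k x j = x j ^ 2 + 2 * x j * L := by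
      intro j hj
      rw [hs1, Finset.mem_filter] at hj
      rw [Fmap, if_pos hj.2.2, ← hL]
    rw [Finset.sum_congr rfl this, Finset.sum_add_distrib, ← hQ]
    have : ∑ j ∈ s1, 2 * x j * L = 2 * L * S := by
      rw [hS, Finset.mul_sum]; exact Finset.sum_congr rfl fun j _ => by ring
    rw [this]
  have hFlast : Fmap k x (Fin.last k)
      = L ^ 2 + 2 * ∑ a ∈ s, ∑ b ∈ s, (if a < b then x a * x b else 0) := by
    rw [Fmap, if_neg hlastk, ← hL, hD]
  have hzF : zfun k (Fmap k x) = L ^ 2 + ((x 0 + S) ^ 2 - (x 0 ^ 2 + Q)) - (Q + 2 * L * S) := by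
    rw [zfun, hFsum, hFlast]
    have h2 : 2 * ∑ a ∈ s, ∑ b ∈ s, (if a < b then x a * x b else 0)
        = (x 0 + S) ^ 2 - (x 0 ^ 2 + Q) := by
      rw [← hT, ← hQ', hsq]; ring
    rw [h2]
  -- the correction sum
  have hcorr : (∑ j : Fin (k + 1), if 1 ≤ j.val ∧ j.val < k then (x 0 - x j) * x j else 0)
      = x 0 * S - Q := by
    rw [← Finset.sum_filter, ← hs1, hS, hQ, Finset.mul_sum, ← Finset.sum_sub_distrib]
    exact Finset.sum_congr rfl fun j _ => by ring
  have hmain : zfun k (Fmap k x)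
      = zfun k x ^ 2 + 2 * ∑ j : Fin (k + 1),
          (if 1 ≤ j.val ∧ j.val < k then (x 0 - x j) * x j else 0) := by
    rw [hzF, hz, hcorr]; ring
  refine ⟨hmain, ?_⟩
  have hnn : 0 ≤ ∑ j : Fin (k + 1), (if 1 ≤ j.val ∧ j.val < k then (x 0 - x j) * x j else 0) := by
    refine Finset.sum_nonneg fun j _ => ?_
    split_ifs with h
    · exact mul_nonneg (sub_nonneg.2 (hmax j h.2)) (hpos j).le
    · exact le_refl 0
  linarith [hmain]
end
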